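/- Let K be a field of characteristic zero in which every element is algebraic over ℚ. Then K̃ equals the set of elements of K that are fixed by every field automorphism of K; that is, K̃ = ⋂_{σ ∈ Aut(K)} {x ∈ K : σ(x) = x}. -/

import Mathlib

/-- A map `f` is *arithmetic* on a subset `A` of a field `K`. -/
def ArithmeticMap {K : Type*} [Field K] (A : Set K) (f : K → K) : Prop :=
  ((1 : K) ∈ A → f 1 = 1) ∧
  (∀ a b : K, a ∈ A → b ∈ A → a + b ∈ A → f (a + b) = f a + f b) ∧
  (∀ a b : K, a ∈ A → b ∈ A → a * b ∈ A → f (a * b) = f a * f b)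

/-- An element `r` of a field `K` is *arithmetically fixed* if there is a finite set
`A ⊆ K` with `r ∈ A` such that every arithmetic map `f : A → K` fixes `r`. -/
def ArithFixed {K : Type*} [Field K] (r : K) : Prop :=
  ∃ A : Finset K, r ∈ A ∧ ∀ f : K → K, ArithmeticMap (↑A : Set K) f → f r = r

open Polynomial Finset in
lemma arith_key {K : Type*} [Field K] [CharZero K] (a : K) (ha : IsAlgebraic ℚ a) :
    ∃ S : Finset K, a ∈ S ∧
      ∀ (A : Set K) (f : K → K), ArithmeticMap A f → ↑S ⊆ A →
        Polynomial.aeval (f a) (minpoly ℚ a) = 0 := by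
  classical
  set p : ℚ[X] := minpoly ℚ a with hp
  set n : ℕ := p.natDegree with hn
  have hn1 : 1 ≤ n := minpoly.natDegree_pos ha.isIntegral
  set c : ℕ → ℚ := fun i => p.coeff i with hc
  set M : ℕ := max 1 ((range (n+1)).sup fun i => max (c i).num.natAbs (c i).den) with hMdef
  have hM1 : 1 ≤ M := le_max_left _ _
  have hMnum : ∀ i ≤ n, (c i).num.natAbs ≤ M := by
    intro i hi
    calc (c i).num.natAbs ≤ max (c i).num.natAbs (c i).den := le_max_left _ _
      _ ≤ (range (n+1)).sup fun i => max (c i).num.natAbs (c i).den :=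
          Finset.le_sup (f := fun i => max (c i).num.natAbs (c i).den) (mem_range.mpr (Nat.lt_succ_of_le hi))
      _ ≤ M := le_max_right _ _
  have hMden : ∀ i ≤ n, (c i).den ≤ M := by
    intro i hi
    calc (c i).den ≤ max (c i).num.natAbs (c i).den := le_max_right _ _
      _ ≤ (range (n+1)).sup fun i => max (c i).num.natAbs (c i).den :=
          Finset.le_sup (f := fun i => max (c i).num.natAbs (c i).den) (mem_range.mpr (Nat.lt_succ_of_le hi))
      _ ≤ M := le_max_right _ _
  set SI : Finset K := (Finset.Icc (-(M:ℤ)) (M:ℤ)).image (fun m : ℤ => (m : K)) with hSI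
  set SP : Finset K := (range (n+1)).image (fun i => a ^ i) with hSP
  set SC : Finset K := (range (n+1)).image (fun i => ((c i : K))) with hSC
  set SCP : Finset K := (range (n+1)).image (fun i => ((c i : K)) * a ^ i) with hSCP
  set ST : Finset K := (range (n+2)).image (fun j => ∑ i ∈ range j, ((c i : K)) * a ^ i) with hST
  refine ⟨SI ∪ SP ∪ SC ∪ SCP ∪ ST, ?_, ?_⟩
  · exact Finset.mem_union_left _ (Finset.mem_union_left _ (Finset.mem_union_left _
      (Finset.mem_union_right _ (Finset.mem_image.mpr ⟨1, mem_range.mpr (by omega), pow_one a⟩))))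
  intro A f hf hSA
  obtain ⟨hf1, hfadd, hfmul⟩ := hf
  -- memberships
  have hI : ∀ m : ℤ, |m| ≤ (M:ℤ) → ((m : K)) ∈ A := by
    intro m hm
    refine hSA ?_
    simp only [Finset.coe_union, Set.mem_union, Finset.mem_coe]
    exact Or.inl (Or.inl (Or.inl (Or.inl (Finset.mem_image.mpr
      ⟨m, Finset.mem_Icc.mpr (abs_le.mp hm), rfl⟩))))
  have hP : ∀ i ≤ n, a ^ i ∈ A := by
    intro i hi
    refine hSA ?_
    simp only [Finset.coe_union, Set.mem_union, Finset.mem_coe]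
    exact Or.inl (Or.inl (Or.inl (Or.inr (Finset.mem_image.mpr
      ⟨i, mem_range.mpr (by omega), rfl⟩))))
  have hCm : ∀ i ≤ n, ((c i : K)) ∈ A := by
    intro i hi
    refine hSA ?_
    simp only [Finset.coe_union, Set.mem_union, Finset.mem_coe]
    exact Or.inl (Or.inl (Or.inr (Finset.mem_image.mpr ⟨i, mem_range.mpr (by omega), rfl⟩)))
  have hCPm : ∀ i ≤ n, ((c i : K)) * a ^ i ∈ A := by
    intro i hi
    refine hSA ?_
    simp only [Finset.coe_union, Set.mem_union, Finset.mem_coe]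
    exact Or.inl (Or.inr (Finset.mem_image.mpr ⟨i, mem_range.mpr (by omega), rfl⟩))
  have hTm : ∀ j ≤ n + 1, (∑ i ∈ range j, ((c i : K)) * a ^ i) ∈ A := by
    intro j hj
    refine hSA ?_
    simp only [Finset.coe_union, Set.mem_union, Finset.mem_coe]
    exact Or.inr (Finset.mem_image.mpr ⟨j, mem_range.mpr (by omega), rfl⟩)
  have h1A : (1 : K) ∈ A := by
    have := hI 1 (by simpa using (by exact_mod_cast hM1 : (1:ℤ) ≤ (M:ℤ)))
    simpa using this
  have h0A : (0 : K) ∈ A := by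
    have := hI 0 (by simp)
    simpa using this
  have h1 : f 1 = 1 := hf1 h1A
  have h0 : f 0 = 0 := by
    have := hfadd 0 0 h0A h0A (by simpa using h0A)
    rw [add_zero] at this
    rwa [left_eq_add] at this
  have hneg : ∀ x : K, x ∈ A → -x ∈ A → f (-x) = - f x := by
    intro x hx hmx
    have := hfadd x (-x) hx hmx (by simpa using h0A)
    rw [add_neg_cancel, h0] at this
    exact eq_neg_of_add_eq_zero_right this.symm
  have hnat : ∀ m : ℕ, m ≤ M → f (m : K) = (m : K) := by
    intro m
    induction m with
    | zero => intro _; simpa using h0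
    | succ k ih =>
      intro hk
      have hkA : ((k : K)) ∈ A := by
        have := hI (k : ℤ) (by rw [abs_of_nonneg (by positivity)]; exact_mod_cast (by omega : k ≤ M))
        simpa using this
      have hk1A : ((k : K) + 1) ∈ A := by
        have := hI ((k : ℤ) + 1) (by rw [abs_of_nonneg (by positivity)]; exact_mod_cast (by omega : k + 1 ≤ M))
        push_cast at this
        simpa using this
      have := hfadd (k : K) 1 hkA h1A hk1A
      rw [h1, ih (by omega)] at this
      push_cast
      exact this
  have hint : ∀ m : ℤ, |m| ≤ (M : ℤ) → f (m : K) = (m : K) := by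
    intro m hm
    rcases le_or_gt 0 m with h | h
    · lift m to ℕ using h
      have hm' : (m : ℤ) ≤ (M : ℤ) := by rwa [abs_of_nonneg (by positivity)] at hm
      have := hnat m (by exact_mod_cast hm')
      simpa using this
    · have hmn : (0:ℤ) ≤ -m := by omega
      have h1' : |(-m)| ≤ (M:ℤ) := by rwa [abs_neg]
      have hfm : f ((-m : ℤ) : K) = ((-m : ℤ) : K) := by
        lift (-m) to ℕ using hmn with k hk
        have hm' : (k : ℤ) ≤ (M : ℤ) := by
          rwa [abs_of_nonneg (by exact_mod_cast Nat.zero_le k)] at h1'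
        have := hnat k (by exact_mod_cast hm')
        simpa using this
      have hmA : ((m : ℤ) : K) ∈ A := hI m hm
      have hmA' : ((-m : ℤ) : K) ∈ A := hI (-m) h1'
      have h2 : f (-((m:ℤ):K)) = -((m:ℤ):K) := by push_cast at hfm ⊢; exact hfm
      have h3 := hneg _ hmA (by push_cast at hmA' ⊢; exact hmA')
      rw [h2] at h3
      exact (neg_injective h3).symm
  have hpow : ∀ i ≤ n, f (a ^ i) = (f a) ^ i := by
    intro i
    induction i with
    | zero => intro _; simpa using h1
    | succ k ih =>
      intro hk
      have := hfmul (a ^ k) a (hP k (by omega)) (by simpa using hP 1 hn1) (by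
        rw [← pow_succ]; exact hP (k+1) hk)
      rw [← pow_succ] at this
      rw [this, ih (by omega), pow_succ]
  have hcoef : ∀ i ≤ n, f ((c i : K)) = ((c i : K)) := by
    intro i hi
    have hvK : (((c i).den : ℤ) : K) ≠ 0 := by
      exact_mod_cast Nat.cast_ne_zero.mpr (c i).den_nz
    have hkey : (((c i).den : ℤ) : K) * ((c i : K)) = (((c i).num : ℤ) : K) := by
      push_cast
      rw [Rat.cast_def]
      field_simp
    have hvA : (((c i).den : ℤ) : K) ∈ A := by
      refine hI _ ?_
      rw [abs_of_nonneg (by positivity)]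
      exact_mod_cast hMden i hi
    have habs : |(c i).num| ≤ (M : ℤ) := by
      rw [Int.abs_eq_natAbs]
      exact_mod_cast hMnum i hi
    have huA : (((c i).num : ℤ) : K) ∈ A := hI _ habs
    have := hfmul _ _ hvA (hCm i hi) (hkey ▸ huA)
    rw [hkey] at this
    have hfv : f (((c i).den : ℤ) : K) = (((c i).den : ℤ) : K) := by
      refine hint _ ?_
      rw [abs_of_nonneg (by positivity)]
      exact_mod_cast hMden i hi
    have hfu : f (((c i).num : ℤ) : K) = (((c i).num : ℤ) : K) := hint _ habs
    rw [hfu, hfv] at this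
    have hfc : f ((c i : K)) = (((c i).num : ℤ) : K) / (((c i).den : ℤ) : K) := by
      rw [eq_div_iff hvK]
      linear_combination -this
    rw [hfc, Rat.cast_def]
    norm_cast
  have hcp : ∀ i ≤ n, f (((c i : K)) * a ^ i) = ((c i : K)) * (f a) ^ i := by
    intro i hi
    have := hfmul _ _ (hCm i hi) (hP i hi) (hCPm i hi)
    rw [this, hcoef i hi, hpow i hi]
  have ht : ∀ j ≤ n + 1, f (∑ i ∈ range j, ((c i : K)) * a ^ i)
      = ∑ i ∈ range j, ((c i : K)) * (f a) ^ i := by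
    intro j
    induction j with
    | zero => intro _; simpa using h0
    | succ k ih =>
      intro hk
      have := hfadd _ _ (hTm k (by omega)) (hCPm k (by omega)) (by
        rw [← Finset.sum_range_succ]; exact hTm (k+1) hk)
      rw [← Finset.sum_range_succ] at this
      rw [this, ih (by omega), hcp k (by omega), Finset.sum_range_succ]
  have hsum0 : (∑ i ∈ range (n+1), ((c i : K)) * a ^ i) = 0 := by
    have := minpoly.aeval ℚ a
    rw [Polynomial.aeval_eq_sum_range (p := p) a] at this
    rw [← this]
    refine Finset.sum_congr rfl fun i _ => ?_
    rw [Rat.smul_def]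
  have hfin := ht (n+1) le_rfl
  rw [hsum0, h0] at hfin
  rw [Polynomial.aeval_eq_sum_range (p := p) (f a)]
  have hrw : ∑ i ∈ range (n+1), p.coeff i • (f a) ^ i
      = ∑ i ∈ range (n+1), ((c i : K)) * (f a) ^ i :=
    Finset.sum_congr rfl fun i _ => Rat.smul_def _ _
  rw [hrw]
  exact hfin.symm


open Polynomial Finset in
lemma arith_key2 {K : Type*} [Field K] [CharZero K] (halg : ∀ x : K, IsAlgebraic ℚ x)
    (B : Finset K) :
    ∃ A : Finset K, B ⊆ A ∧ ∀ f : K → K, ArithmeticMap (↑A : Set K) f →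
      (f 1 = 1 ∧
       (∀ x ∈ B, ∀ y ∈ B, f (x + y) = f x + f y) ∧
       (∀ x ∈ B, ∀ y ∈ B, f (x * y) = f x * f y) ∧
       (∀ x ∈ B, Polynomial.aeval (f x) (minpoly ℚ x) = 0)) := by
  classical
  choose S hmemS hkeyS using fun x : K => arith_key x (halg x)
  set B' : Finset K := B ∪ Finset.image₂ (· + ·) B B ∪ Finset.image₂ (· * ·) B B ∪ {1}
    with hB'
  refine ⟨B'.biUnion S, ?_, ?_⟩
  · intro x hx
    exact Finset.mem_biUnion.mpr ⟨x, by simp [hB', hx], hmemS x⟩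
  intro f hf
  have hSsub : ∀ x ∈ B', (↑(S x) : Set K) ⊆ ↑(B'.biUnion S) := by
    intro x hx
    exact_mod_cast Finset.coe_subset.mpr (Finset.subset_biUnion_of_mem S hx)
  have hmem : ∀ x ∈ B', x ∈ (↑(B'.biUnion S) : Set K) := by
    intro x hx
    exact Finset.mem_coe.mpr (Finset.mem_biUnion.mpr ⟨x, hx, hmemS x⟩)
  have h1B' : (1 : K) ∈ B' := by simp [hB']
  refine ⟨hf.1 (hmem 1 h1B'), ?_, ?_, ?_⟩
  · intro x hx y hy
    have hxB' : x ∈ B' := by simp [hB', hx]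
    have hyB' : y ∈ B' := by simp [hB', hy]
    have hxyB' : x + y ∈ B' := by
      simp only [hB', Finset.mem_union]
      exact Or.inl (Or.inl (Or.inr (Finset.mem_image₂.mpr ⟨x, hx, y, hy, rfl⟩)))
    exact hf.2.1 x y (hmem x hxB') (hmem y hyB') (hmem _ hxyB')
  · intro x hx y hy
    have hxB' : x ∈ B' := by simp [hB', hx]
    have hyB' : y ∈ B' := by simp [hB', hy]
    have hxyB' : x * y ∈ B' := by
      simp only [hB', Finset.mem_union]
      exact Or.inl (Or.inr (Finset.mem_image₂.mpr ⟨x, hx, y, hy, rfl⟩))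
    exact hf.2.2 x y (hmem x hxB') (hmem y hyB') (hmem _ hxyB')
  · intro x hx
    exact hkeyS x _ f hf (hSsub x (by simp [hB', hx]))

/-- If `K` is a field of characteristic zero in which every element is algebraic over `ℚ`,
then `K̃` is the set of elements fixed by every field automorphism of `K`. -/
theorem arithFixed_eq_fixed_by_automorphisms (K : Type*) [Field K] [CharZero K]
    (halg : ∀ x : K, IsAlgebraic ℚ x) :
    {r : K | ArithFixed r} = ⋂ σ : K ≃+* K, {x : K | σ x = x} := by
  classical
  have halgA : Algebra.IsAlgebraic ℚ K := ⟨halg⟩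
  ext r
  simp only [Set.mem_setOf_eq, Set.mem_iInter]
  constructor
  · rintro ⟨A, hrA, hA⟩ σ
    exact hA σ ⟨fun _ => map_one σ, fun a b _ _ _ => map_add σ a b,
      fun a b _ _ _ => map_mul σ a b⟩
  · intro hfix
    by_contra hnot
    rw [ArithFixed] at hnot
    push_neg at hnot
    -- countability of K
    have hKc : Countable K := by
      have huniv : {x : K | IsAlgebraic ℚ x} = Set.univ := Set.eq_univ_of_forall halg
      exact Set.countable_univ_iff.mp (huniv ▸ Algebraic.countable ℚ K)
    obtain ⟨e, he⟩ := exists_surjective_nat K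
    set B : ℕ → Finset K := fun n => insert r ((Finset.range n).image e) with hB
    choose A hBA hA using fun n => arith_key2 halg (B n)
    choose f hfArith hfr using fun n =>
      hnot (A n) (hBA n (Finset.mem_insert_self r _))
    have hprop := fun n => hA n (f n) (hfArith n)
    -- ultrafilter limit
    set U : Ultrafilter ℕ := Ultrafilter.of Filter.atTop with hU
    have hUle : (U : Filter ℕ) ≤ Filter.atTop := Ultrafilter.of_le _
    have hBmem : ∀ x : K, ∀ᶠ n in (U : Filter ℕ), x ∈ B n := by
      intro x
      obtain ⟨m, rfl⟩ := he x
      refine Filter.Eventually.filter_mono hUle ?_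
      filter_upwards [Filter.eventually_ge_atTop (m+1)] with n hn
      exact Finset.mem_insert_of_mem
        (Finset.mem_image.mpr ⟨m, Finset.mem_range.mpr (by omega), rfl⟩)
    have hlim : ∀ x : K, ∃ v : K, ∀ᶠ n in (U : Filter ℕ), f n x = v := by
      intro x
      have hmp : (minpoly ℚ x) ≠ 0 := minpoly.ne_zero (halg x).isIntegral
      have hroot : ∀ᶠ n in (U : Filter ℕ), f n x ∈ ((minpoly ℚ x).aroots K).toFinset := by
        filter_upwards [hBmem x] with n hn
        exact Multiset.mem_toFinset.mpr (Polynomial.mem_aroots.mpr ⟨hmp, (hprop n).2.2.2 x hn⟩)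
      set s : Finset K := ((minpoly ℚ x).aroots K).toFinset with hs
      have hcover : {n : ℕ | f n x ∈ s} = ⋃ v ∈ (↑s : Set K), {n : ℕ | f n x = v} := by
        ext n; simp
      have hmemU : {n : ℕ | f n x ∈ s} ∈ U := hroot
      rw [hcover] at hmemU
      obtain ⟨v, _, hv⟩ := (Ultrafilter.finite_biUnion_mem_iff s.finite_toSet).mp hmemU
      exact ⟨v, hv⟩
    choose g hg using hlim
    have hgadd : ∀ x y : K, g (x + y) = g x + g y := by
      intro x y
      obtain ⟨n, h1, h2, h3, h4, h5⟩ :=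
        ((hg x).and ((hg y).and ((hg (x+y)).and ((hBmem x).and (hBmem y))))).exists
      rw [← h1, ← h2, ← h3]
      exact (hprop n).2.1 x h4 y h5
    have hgmul : ∀ x y : K, g (x * y) = g x * g y := by
      intro x y
      obtain ⟨n, h1, h2, h3, h4, h5⟩ :=
        ((hg x).and ((hg y).and ((hg (x*y)).and ((hBmem x).and (hBmem y))))).exists
      rw [← h1, ← h2, ← h3]
      exact (hprop n).2.2.1 x h4 y h5
    have hgone : g 1 = 1 := by
      obtain ⟨n, h1⟩ := (hg 1).exists
      rw [← h1, (hprop n).1]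
    have hgzero : g 0 = 0 := by
      have := hgadd 0 0
      rw [add_zero] at this
      rwa [left_eq_add] at this
    have hgr : g r ≠ r := by
      intro hcon
      obtain ⟨n, hn⟩ := (hg r).exists
      exact hfr n (by rw [hn, hcon])
    set G : K →+* K :=
      { toFun := g, map_one' := hgone, map_mul' := hgmul,
        map_zero' := hgzero, map_add' := hgadd } with hG
    have hNZ : NoZeroSMulDivisors ℚ K :=
      inferInstance
    have hbij : Function.Bijective G := by
      have := Algebra.IsAlgebraic.algHom_bijective G.toRatAlgHom
      rwa [show (G.toRatAlgHom : K → K) = G from rfl] at this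
    set σ : K ≃+* K := RingEquiv.ofBijective G hbij with hσ
    have : σ r = r := hfix σ
    exact hgr this
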